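/- For any set A ⊆ ℕ, the following are equivalent: (i) A computes a function f : ℕ → ℕ with W_{f(n)} ≠ W_n for all n; (ii) A computes a function h : ℕ → ℕ with φ_{h(e)} ≠ φ_e for all e. -/

import Mathlib

/-- The `e`-th partial computable function in a standard numbering
satisfying the S-m-n theorem. -/
def phi (e : ℕ) : ℕ →. ℕ := (Denumerable.ofNat Nat.Partrec.Code e).eval

/-- The `e`-th computably enumerable set `W e = dom (phi e)`. -/
def W (e : ℕ) : Set ℕ := {n | (phi e n).Dom}

/-- Partial functions computable relative to an oracle `O`. -/
inductive OracleRecursiveIn (O : ℕ →. ℕ) : (ℕ →. ℕ) → Prop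
  | oracle : OracleRecursiveIn O O
  | zero : OracleRecursiveIn O (pure 0)
  | succ : OracleRecursiveIn O Nat.succ
  | left : OracleRecursiveIn O ↑fun n : ℕ => n.unpair.1
  | right : OracleRecursiveIn O ↑fun n : ℕ => n.unpair.2
  | pair {f g} : OracleRecursiveIn O f → OracleRecursiveIn O g →
      OracleRecursiveIn O fun n => Nat.pair <$> f n <*> g n
  | comp {f g} : OracleRecursiveIn O f → OracleRecursiveIn O g → OracleRecursiveIn O fun n => g n >>= f
  | prec {f g} : OracleRecursiveIn O f → OracleRecursiveIn O g → OracleRecursiveIn O (Nat.unpaired fun a n =>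
      n.rec (f a) fun y IH => do let i ← IH; g (Nat.pair a (Nat.pair y i)))
  | rfind {f} : OracleRecursiveIn O f →
      OracleRecursiveIn O fun a => Nat.rfind fun n => (fun m => m = 0) <$> f (Nat.pair a n)

open scoped Classical in
/-- The characteristic function of a set, as an oracle. -/
noncomputable def charFn (A : Set ℕ) : ℕ →. ℕ := fun n => Part.some (if n ∈ A then 1 else 0)

/-- Turing reducibility for sets: `A ≤_T B`. -/
def TuringRed (A B : Set ℕ) : Prop := OracleRecursiveIn (charFn B) (charFn A)

/-- `A` computes the total function `f`, i.e. `f ≤_T A`. -/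
def FunRecIn (A : Set ℕ) (f : ℕ → ℕ) : Prop := OracleRecursiveIn (charFn A) fun n => Part.some (f n)

/-- The halting set ∅′. -/
def Khalt : Set ℕ := {n | (phi n n).Dom}

namespace FPFAux

open Nat.Partrec (Code)
open Nat.Partrec.Code
open Computable Partrec

/-- Any (unrelativized) partial recursive function is recursive in any oracle. -/
theorem recursiveIn_of_partrec {O : ℕ →. ℕ} {f : ℕ →. ℕ} (hf : Nat.Partrec f) :
    OracleRecursiveIn O f := by
  induction hf with
  | zero => exact .zero
  | succ => exact .succ
  | left => exact .left
  | right => exact .right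
  | pair _ _ ih₁ ih₂ => exact .pair ih₁ ih₂
  | comp _ _ ih₁ ih₂ => exact .comp ih₁ ih₂
  | prec _ _ ih₁ ih₂ => exact .prec ih₁ ih₂
  | rfind _ ih => exact .rfind ih

theorem funRecIn_comp {A : Set ℕ} {h : ℕ → ℕ} (hh : FunRecIn A h) {σ τ : ℕ → ℕ}
    (hσ : Computable σ) (hτ : Computable τ) : FunRecIn A fun n => σ (h (τ n)) := by
  have hσ' : OracleRecursiveIn (charFn A) fun n => Part.some (σ n) :=
    recursiveIn_of_partrec (Partrec.nat_iff.1 hσ)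
  have hτ' : OracleRecursiveIn (charFn A) fun n => Part.some (τ n) :=
    recursiveIn_of_partrec (Partrec.nat_iff.1 hτ)
  have h1 := OracleRecursiveIn.comp hh hτ'
  have h2 := OracleRecursiveIn.comp hσ' h1
  have : (fun n => ((fun n => Part.some (τ n)) n >>= fun n => Part.some (h n)) >>=
      fun n => Part.some (σ n)) = fun n => Part.some (σ (h (τ n))) := by
    funext n; simp
  rwa [this] at h2

/-- The "graph coding" function: `G2 e q` converges iff `q = ⟨x, y⟩` with `y ∈ phi e x`. -/
def G2 : ℕ → ℕ → Part ℕ := fun e q =>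
  (eval (Denumerable.ofNat Code e) q.unpair.1).bind fun y =>
    cond (q.unpair.2 == y) (Part.some 0) Part.none

theorem partrec_G2 : Partrec₂ G2 := by
  have h1 : Partrec fun p : ℕ × ℕ => eval (Denumerable.ofNat Code p.1) p.2.unpair.1 :=
    eval_part.comp ((Computable.ofNat Code).comp fst)
      (fst.comp (Computable.unpair.comp snd))
  exact h1.bind <| Partrec.cond
    (Primrec.to_comp <| Primrec.beq.comp
      (Primrec.snd.comp (Primrec.unpair.comp (Primrec.snd.comp Primrec.fst))) Primrec.snd)
    (Partrec.const' (Part.some 0)) Partrec.none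

theorem exists_sigma_code : ∃ c : Code, ∀ e q, eval (curry c e) q = G2 e q := by
  obtain ⟨c, hc⟩ := exists_code.1 (Partrec₂.unpaired'.2 partrec_G2)
  exact ⟨c, fun e q => by rw [eval_curry, hc]; simp [Nat.unpaired]⟩

noncomputable def cG : Code := exists_sigma_code.choose

theorem cG_spec : ∀ e q, eval (curry cG e) q = G2 e q := exists_sigma_code.choose_spec

noncomputable def sigma (e : ℕ) : ℕ := Encodable.encode (curry cG e)

theorem computable_sigma : Computable sigma :=
  Primrec.to_comp <| Primrec.encode.comp <|
    Nat.Partrec.Code.primrec₂_curry.comp (Primrec.const cG) Primrec.id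

theorem phi_sigma (e q : ℕ) : phi (sigma e) q = G2 e q := by
  unfold phi sigma
  rw [Denumerable.ofNat_encode]
  exact cG_spec e q

theorem mem_W_sigma {m q : ℕ} : q ∈ W (sigma m) ↔ q.unpair.2 ∈ phi m q.unpair.1 := by
  show (phi (sigma m) q).Dom ↔ _
  rw [phi_sigma]
  unfold G2
  constructor
  · intro hd
    obtain ⟨z, hz⟩ := Part.dom_iff_mem.1 hd
    simp only [Part.mem_bind_iff] at hz
    obtain ⟨y, hy, hz⟩ := hz
    by_cases hb : q.unpair.2 == y
    · simp only [beq_iff_eq] at hb; rw [hb]; exact hy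
    · simp [hb] at hz
  · intro hy
    apply Part.dom_iff_mem.2
    refine ⟨0, Part.mem_bind_iff.2 ⟨q.unpair.2, ?_, ?_⟩⟩
    · exact hy
    · simp

/-- The "graph decoding" function: `F2 e x` searches for `y` with `⟨x,y⟩ ∈ W e`. -/
def F2 : ℕ → ℕ → Part ℕ := fun e x =>
  (Nat.rfind fun n => Part.some
    ((evaln n.unpair.2 (Denumerable.ofNat Code e) (Nat.pair x n.unpair.1)).isSome)).map
    fun n => n.unpair.1

theorem partrec_F2 : Partrec₂ F2 := by
  have hp : Computable fun p : (ℕ × ℕ) × ℕ =>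
      (evaln p.2.unpair.2 (Denumerable.ofNat Code p.1.1) (Nat.pair p.1.2 p.2.unpair.1)).isSome :=
    Primrec.to_comp <| Primrec.option_isSome.comp <|
      primrec_evaln.comp <|
        ((Primrec.snd.comp (Primrec.unpair.comp Primrec.snd)).pair
          ((Primrec.ofNat Code).comp (Primrec.fst.comp Primrec.fst))).pair
        (Primrec₂.natPair.comp (Primrec.snd.comp Primrec.fst)
          (Primrec.fst.comp (Primrec.unpair.comp Primrec.snd)))
  exact ((Partrec.rfind (hp.partrec.to₂)).map
    ((fst.comp Computable.unpair).comp snd).to₂).to₂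

theorem exists_tau_code : ∃ c : Code, ∀ e x, eval (curry c e) x = F2 e x := by
  obtain ⟨c, hc⟩ := exists_code.1 (Partrec₂.unpaired'.2 partrec_F2)
  exact ⟨c, fun e x => by rw [eval_curry, hc]; simp [Nat.unpaired]⟩

noncomputable def cF : Code := exists_tau_code.choose

theorem cF_spec : ∀ e x, eval (curry cF e) x = F2 e x := exists_tau_code.choose_spec

noncomputable def tau (e : ℕ) : ℕ := Encodable.encode (curry cF e)

theorem computable_tau : Computable tau :=
  Primrec.to_comp <| Primrec.encode.comp <|
    Nat.Partrec.Code.primrec₂_curry.comp (Primrec.const cF) Primrec.id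

theorem phi_tau (e x : ℕ) : phi (tau e) x = F2 e x := by
  unfold phi tau
  rw [Denumerable.ofNat_encode]
  exact cF_spec e x

theorem mem_F2 {n x y : ℕ} (hy : y ∈ F2 n x) : Nat.pair x y ∈ W n := by
  unfold F2 at hy
  obtain ⟨n₀, hn₀, hy⟩ := (Part.mem_map_iff _).1 hy
  have hspec := Nat.rfind_spec hn₀
  simp only [Part.mem_some_iff] at hspec
  obtain ⟨z, hz⟩ := Option.isSome_iff_exists.1 hspec.symm
  have := evaln_sound (by exact hz : z ∈ evaln n₀.unpair.2
    (Denumerable.ofNat Code n) (Nat.pair x n₀.unpair.1))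
  subst hy
  exact Part.dom_iff_mem.2 ⟨z, this⟩

theorem F2_eq {n m : ℕ} (hW : W n = W (sigma m)) (x : ℕ) : F2 n x = phi m x := by
  apply Part.ext
  intro y
  have key : ∀ y', Nat.pair x y' ∈ W n ↔ y' ∈ phi m x := by
    intro y'
    rw [hW, mem_W_sigma, Nat.unpair_pair]
  constructor
  · intro hy
    exact (key y).1 (mem_F2 hy)
  · intro hy
    -- the search converges
    have hWn : Nat.pair x y ∈ W n := (key y).2 hy
    obtain ⟨z, hz⟩ := Part.dom_iff_mem.1 hWn
    obtain ⟨k, hk⟩ := evaln_complete.1 hz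
    have hdom : (Nat.rfind fun n₀ => Part.some
        ((evaln n₀.unpair.2 (Denumerable.ofNat Code n) (Nat.pair x n₀.unpair.1)).isSome)).Dom := by
      apply Nat.rfind_dom'.2
      refine ⟨Nat.pair y k, ?_, by intros; trivial⟩
      show true ∈ Part.some ((evaln (Nat.unpair (Nat.pair y k)).2 (Denumerable.ofNat Code n)
        (Nat.pair x (Nat.unpair (Nat.pair y k)).1)).isSome)
      simp only [Nat.unpair_pair, Part.mem_some_iff]
      exact (Option.isSome_iff_exists.2 ⟨z, hk⟩).symm
    obtain ⟨n₀, hn₀⟩ := Part.dom_iff_mem.1 hdom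
    have h1 : n₀.unpair.1 ∈ F2 n x := by
      unfold F2
      exact (Part.mem_map_iff _).2 ⟨n₀, ⟨hn₀, rfl⟩⟩
    have h2 : n₀.unpair.1 ∈ phi m x := (key _).1 (mem_F2 h1)
    have : n₀.unpair.1 = y := Part.mem_unique h2 hy
    rwa [this] at h1

end FPFAux

open FPFAux in
/-- Equivalence of computing an FPF function and computing an index-level DNC function. -/
theorem fpf_equiv (A : Set ℕ) :
    (∃ f : ℕ → ℕ, FunRecIn A f ∧ ∀ n : ℕ, W (f n) ≠ W n) ↔
    (∃ h : ℕ → ℕ, FunRecIn A h ∧ ∀ e : ℕ, phi (h e) ≠ phi e) := by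
  constructor
  · rintro ⟨f, hf, hfpf⟩
    refine ⟨f, hf, fun e he => hfpf e ?_⟩
    unfold W
    rw [he]
  · rintro ⟨h, hh, hdnc⟩
    refine ⟨fun n => sigma (h (tau n)), funRecIn_comp hh computable_sigma computable_tau, ?_⟩
    intro n hWeq
    apply hdnc (tau n)
    have : phi (tau n) = phi (h (tau n)) := by
      funext x
      rw [phi_tau, F2_eq hWeq.symm]
    exact this.symm
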